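/- Let a ≥ 0, b > 0, σ > 0 and 0 ≤ λ < μ be real numbers. Then the integral ∫₀^∞ x^{σ−1} e^{−μx} · ₁F₁(a; b; λx) dx converges and equals Γ(σ) · μ^{−σ} · ₂F₁(a, σ; b; λ/μ), where the ₂F₁ series converges since 0 ≤ λ/μ < 1. -/

import Mathlib

open Real MeasureTheory Set Filter Topology ENNReal

/-- Pochhammer symbol `(q)_n = q (q+1) ⋯ (q+n-1)`, with `(q)_0 = 1`. -/
noncomputable def poch (q : ℝ) (n : ℕ) : ℝ := ∏ i ∈ Finset.range n, (q + i)

/-- Confluent (Kummer) hypergeometric function `₁F₁(a; b; z)`. -/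
noncomputable def oneF1 (a b z : ℝ) : ℝ :=
  ∑' n : ℕ, (poch a n / poch b n) * z ^ n / (n.factorial : ℝ)

/-- Gauss hypergeometric function `₂F₁(a, b; c; z)`. -/
noncomputable def twoF1 (a b c z : ℝ) : ℝ :=
  ∑' n : ℕ, (poch a n * poch b n / poch c n) * z ^ n / (n.factorial : ℝ)

/-- Confluent Appell (Humbert) function `Φ₂(b₁, b₂; c; x, y)`. -/
noncomputable def Phi2 (b₁ b₂ c x y : ℝ) : ℝ :=
  ∑' p : ℕ × ℕ, (poch b₁ p.1 * poch b₂ p.2 / poch c (p.1 + p.2)) *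
    x ^ p.1 * y ^ p.2 / ((p.1.factorial : ℝ) * (p.2.factorial : ℝ))

private lemma poch_succ (q : ℝ) (n : ℕ) : poch q (n + 1) = poch q n * (q + n) := by
  simp [poch, Finset.prod_range_succ]

private lemma poch_nonneg {q : ℝ} (hq : 0 ≤ q) (n : ℕ) : 0 ≤ poch q n :=
  Finset.prod_nonneg fun i _ => by positivity

private lemma poch_pos {q : ℝ} (hq : 0 < q) (n : ℕ) : 0 < poch q n :=
  Finset.prod_pos fun i _ => by positivity

private lemma tendsto_div_add (c d : ℝ) :
    Tendsto (fun n : ℕ => c / (d + n)) atTop (𝓝 0) := by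
  have h : Tendsto (fun n : ℕ => d + (n : ℝ)) atTop atTop :=
    tendsto_atTop_add_const_left _ d tendsto_natCast_atTop_atTop
  simpa [div_eq_mul_inv] using h.inv_tendsto_atTop.const_mul c

private lemma tendsto_ratio (c d : ℝ) :
    Tendsto (fun n : ℕ => (c + n) / (d + n)) atTop (𝓝 1) := by
  have h : Tendsto (fun n : ℕ => 1 + (c - d) / (d + n)) atTop (𝓝 1) := by
    simpa using (tendsto_div_add (c - d) d).const_add 1
  have hpos : ∀ᶠ n : ℕ in atTop, (0 : ℝ) < d + n :=
    (tendsto_atTop_add_const_left _ d tendsto_natCast_atTop_atTop).eventually_gt_atTop 0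
  refine Tendsto.congr' ?_ h
  filter_upwards [hpos] with n hn
  field_simp
  ring

private lemma ratio_summable {f g : ℕ → ℝ} (hf : ∀ n, 0 ≤ f n)
    (hfg : ∀ n, f (n + 1) = f n * g n) {L : ℝ} (hL : L < 1)
    (hg : Tendsto g atTop (𝓝 L)) : Summable f := by
  have hr1 : (L + 1) / 2 < 1 := by linarith
  have hev : ∀ᶠ n in atTop, g n < (L + 1) / 2 := hg.eventually_lt_const (by linarith)
  refine summable_of_ratio_norm_eventually_le hr1 ?_
  filter_upwards [hev] with n hn
  rw [Real.norm_of_nonneg (hf _), Real.norm_of_nonneg (hf _), hfg]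
  calc f n * g n ≤ f n * ((L + 1) / 2) := mul_le_mul_of_nonneg_left hn.le (hf n)
    _ = (L + 1) / 2 * f n := mul_comm _ _

private lemma Gamma_poch {σ : ℝ} (hσ : 0 < σ) (n : ℕ) :
    Real.Gamma (σ + n) = Real.Gamma σ * poch σ n := by
  induction n with
  | zero => simp [poch]
  | succ n ih =>
    have h1 : σ + (n : ℝ) ≠ 0 := by positivity
    rw [show σ + ((n + 1 : ℕ) : ℝ) = (σ + n) + 1 by push_cast; ring,
      Real.Gamma_add_one h1, ih, poch_succ]
    ring

private lemma summable_twoF1_term {a b σ ρ : ℝ} (ha : 0 ≤ a) (hb : 0 < b) (hσ : 0 < σ)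
    (hρ0 : 0 ≤ ρ) (hρ : ρ < 1) :
    Summable (fun n : ℕ => (poch a n * poch σ n / poch b n) * ρ ^ n / (n.factorial : ℝ)) := by
  have hf : ∀ n : ℕ, 0 ≤ (poch a n * poch σ n / poch b n) * ρ ^ n / (n.factorial : ℝ) := by
    intro n
    have h1 := poch_nonneg ha n
    have h2 := poch_pos hσ n
    have h3 := poch_pos hb n
    positivity
  refine ratio_summable hf (g := fun n => ((a + n) / (b + n)) * (((σ + n) / (1 + n)) * ρ))
    ?_ (show (1 : ℝ) * (1 * ρ) < 1 by simpa) ?_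
  · intro n
    have h3 := (poch_pos hb n).ne'
    have h4 : ((n.factorial : ℝ)) ≠ 0 := Nat.cast_ne_zero.mpr n.factorial_ne_zero
    have h5 : b + (n : ℝ) ≠ 0 := by positivity
    have h6 : (1 : ℝ) + n ≠ 0 := by positivity
    rw [poch_succ, poch_succ, poch_succ, pow_succ, Nat.factorial_succ]
    push_cast
    field_simp
    ring
  · exact (tendsto_ratio a b).mul ((tendsto_ratio σ 1).mul_const ρ)

private lemma summable_oneF1_term {a b : ℝ} (ha : 0 ≤ a) (hb : 0 < b) {z : ℝ} (hz : 0 ≤ z) :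
    Summable (fun n : ℕ => (poch a n / poch b n) * z ^ n / (n.factorial : ℝ)) := by
  have hf : ∀ n : ℕ, 0 ≤ (poch a n / poch b n) * z ^ n / (n.factorial : ℝ) := by
    intro n
    have h1 := poch_nonneg ha n
    have h3 := poch_pos hb n
    positivity
  refine ratio_summable hf (g := fun n => ((a + n) / (b + n)) * (z / (1 + n)))
    ?_ (show (1 : ℝ) * 0 < 1 by norm_num) ?_
  · intro n
    have h3 := (poch_pos hb n).ne'
    have h4 : ((n.factorial : ℝ)) ≠ 0 := Nat.cast_ne_zero.mpr n.factorial_ne_zero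
    have h5 : b + (n : ℝ) ≠ 0 := by positivity
    have h6 : (1 : ℝ) + n ≠ 0 := by positivity
    rw [poch_succ, poch_succ, pow_succ, Nat.factorial_succ]
    push_cast
    field_simp
    ring
  · exact (tendsto_ratio a b).mul (tendsto_div_add z 1)

private noncomputable def Fterm (a b σ lam μ : ℝ) (n : ℕ) (x : ℝ) : ℝ :=
  x ^ (σ - 1) * Real.exp (-μ * x) * ((poch a n / poch b n) * (lam * x) ^ n / (n.factorial : ℝ))

/-- Gradshteyn–Ryzhik 7.522.9 for `₁F₁`: the integral
`∫₀^∞ x^{σ−1} e^{−μx} ₁F₁(a; b; λx) dx` converges and equals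
`Γ(σ) μ^{−σ} ₂F₁(a, σ; b; λ/μ)`. -/
theorem statement_0 (a b σ lam μ : ℝ) (ha : 0 ≤ a) (hb : 0 < b) (hσ : 0 < σ)
    (hlam : 0 ≤ lam) (hlt : lam < μ) :
    IntegrableOn (fun x : ℝ => x ^ (σ - 1) * Real.exp (-μ * x) * oneF1 a b (lam * x))
      (Set.Ioi 0) ∧
    ∫ x in Set.Ioi (0 : ℝ), x ^ (σ - 1) * Real.exp (-μ * x) * oneF1 a b (lam * x)
      = Real.Gamma σ * μ ^ (-σ) * twoF1 a σ b (lam / μ) := by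
  have hμ : 0 < μ := lt_of_le_of_lt hlam hlt
  -- the integrand as a tsum
  have hfunext : (fun x : ℝ => x ^ (σ - 1) * Real.exp (-μ * x) * oneF1 a b (lam * x))
      = fun x => ∑' n : ℕ, Fterm a b σ lam μ n x := by
    funext x
    rw [oneF1, ← tsum_mul_left]
    rfl
  -- pointwise form of each term on `Ioi 0`
  have hC : ∀ n : ℕ, ∀ x ∈ Ioi (0 : ℝ), Fterm a b σ lam μ n x
      = ((poch a n / poch b n) * lam ^ n / (n.factorial : ℝ))
        * (x ^ (σ + n - 1) * Real.exp (-(μ * x))) := by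
    intro n x hx
    have hx0 : (0 : ℝ) < x := hx
    rw [Fterm, mul_pow, ← Real.rpow_natCast x n,
      show σ + (n : ℝ) - 1 = (σ - 1) + (n : ℝ) by ring, Real.rpow_add hx0, neg_mul]
    ring
  -- nonnegativity on `Ioi 0`
  have hFnn : ∀ n : ℕ, ∀ x ∈ Ioi (0 : ℝ), 0 ≤ Fterm a b σ lam μ n x := by
    intro n x hx
    have hx0 : (0 : ℝ) < x := hx
    have h1 := poch_nonneg ha n
    have h3 := poch_pos hb n
    rw [Fterm]
    positivity
  -- measurability
  have hmeas : ∀ n : ℕ, Measurable (Fterm a b σ lam μ n) := by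
    intro n
    unfold Fterm
    fun_prop
  -- integrability of each term
  have hint : ∀ n : ℕ, IntegrableOn (Fterm a b σ lam μ n) (Ioi 0) := by
    intro n
    have h1 : IntegrableOn (fun x : ℝ => x ^ (σ + n - 1) * Real.exp (-(μ * x))) (Ioi 0) := by
      have := integrableOn_rpow_mul_exp_neg_mul_rpow (p := 1) (s := σ + n - 1) (b := μ)
        (by have : (0:ℝ) ≤ n := n.cast_nonneg; linarith) zero_lt_one hμ
      simpa [Real.rpow_one, neg_mul] using this
    exact MeasureTheory.IntegrableOn.congr_fun (h1.const_mul _) (fun x hx => (hC n x hx).symm) measurableSet_Ioi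
  -- value of each integral
  have hval : ∀ n : ℕ, ∫ x in Ioi (0 : ℝ), Fterm a b σ lam μ n x
      = (Real.Gamma σ * μ ^ (-σ)) *
        ((poch a n * poch σ n / poch b n) * (lam / μ) ^ n / (n.factorial : ℝ)) := by
    intro n
    rw [setIntegral_congr_fun measurableSet_Ioi (hC n), integral_const_mul,
      Real.integral_rpow_mul_exp_neg_mul_Ioi (by positivity) hμ,
      Gamma_poch hσ n]
    have hsplit : (1 / μ) ^ (σ + (n : ℝ)) = μ ^ (-σ) * (1 / μ) ^ (n : ℕ) := by
      rw [Real.rpow_add (by positivity), Real.rpow_natCast, one_div,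
        Real.inv_rpow hμ.le, ← Real.rpow_neg hμ.le]
    rw [hsplit]
    have h3 := (poch_pos hb n).ne'
    have h4 : ((n.factorial : ℝ)) ≠ 0 := Nat.cast_ne_zero.mpr n.factorial_ne_zero
    rw [div_pow, div_pow, one_pow]
    field_simp
  -- summability of the integrals
  have hρ0 : 0 ≤ lam / μ := div_nonneg hlam hμ.le
  have hρ1 : lam / μ < 1 := (div_lt_one hμ).mpr hlt
  have hsum_t := summable_twoF1_term ha hb hσ hρ0 hρ1
  have hI : Summable (fun n : ℕ => ∫ x in Ioi (0 : ℝ), Fterm a b σ lam μ n x) :=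
    (hsum_t.mul_left (Real.Gamma σ * μ ^ (-σ))).congr fun n => (hval n).symm
  have hF_norm : ∀ n : ℕ, ∫ x in Ioi (0 : ℝ), ‖Fterm a b σ lam μ n x‖
      = ∫ x in Ioi (0 : ℝ), Fterm a b σ lam μ n x :=
    fun n => setIntegral_congr_fun measurableSet_Ioi
      (fun x hx => Real.norm_of_nonneg (hFnn n x hx))
  have hF_sum : Summable (fun n : ℕ => ∫ x in Ioi (0 : ℝ), ‖Fterm a b σ lam μ n x‖) :=
    hI.congr fun n => (hF_norm n).symm
  -- pointwise summability on `Ioi 0`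
  have hsumx : ∀ x ∈ Ioi (0 : ℝ), Summable (fun n : ℕ => Fterm a b σ lam μ n x) := by
    intro x hx
    have hx0 : (0 : ℝ) < x := hx
    exact (summable_oneF1_term ha hb (mul_nonneg hlam hx0.le)).mul_left
      (x ^ (σ - 1) * Real.exp (-μ * x))
  -- measurability of the sum
  have haesm : AEStronglyMeasurable (fun x => ∑' n : ℕ, Fterm a b σ lam μ n x)
      (volume.restrict (Ioi 0)) := by
    refine aestronglyMeasurable_of_tendsto_ae atTop
      (f := fun k x => ∑ n ∈ Finset.range k, Fterm a b σ lam μ n x)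
      (fun k => (Finset.measurable_sum _ fun n _ => hmeas n).aestronglyMeasurable) ?_
    filter_upwards [ae_restrict_mem measurableSet_Ioi] with x hx
    exact ((hsumx x hx).hasSum).tendsto_sum_nat
  -- finiteness of the integral of the sum
  have hfin : HasFiniteIntegral (fun x => ∑' n : ℕ, Fterm a b σ lam μ n x)
      (volume.restrict (Ioi 0)) := by
    rw [hasFiniteIntegral_def]
    calc ∫⁻ x in Ioi (0:ℝ), ‖∑' n : ℕ, Fterm a b σ lam μ n x‖₊
        ≤ ∫⁻ x in Ioi (0:ℝ), ∑' n : ℕ, (‖Fterm a b σ lam μ n x‖₊ : ℝ≥0∞) := by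
          refine lintegral_mono_ae ?_
          filter_upwards [ae_restrict_mem measurableSet_Ioi] with x hx
          have hs' : Summable (fun n : ℕ => ‖Fterm a b σ lam μ n x‖₊) := by
            rw [← NNReal.summable_coe]
            simpa [Real.norm_eq_abs] using (hsumx x hx).abs
          exact (ENNReal.coe_le_coe.2 (nnnorm_tsum_le hs')).trans_eq (ENNReal.coe_tsum hs')
      _ = ∑' n : ℕ, ∫⁻ x in Ioi (0:ℝ), (‖Fterm a b σ lam μ n x‖₊ : ℝ≥0∞) :=
          lintegral_tsum fun n => ((hmeas n).nnnorm.coe_nnreal_ennreal).aemeasurable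
      _ < ⊤ := by
          have heq : ∀ n : ℕ, ∫⁻ x in Ioi (0:ℝ), (‖Fterm a b σ lam μ n x‖₊ : ℝ≥0∞)
              = ENNReal.ofReal (∫ x in Ioi (0:ℝ), ‖Fterm a b σ lam μ n x‖) :=
            fun n => (ofReal_integral_norm_eq_lintegral_enorm (hint n)).symm
          simp_rw [heq]
          rw [← ENNReal.ofReal_tsum_of_nonneg
            (fun n => integral_nonneg fun x => norm_nonneg _) hF_sum]
          exact ENNReal.ofReal_lt_top
  constructor
  · rw [hfunext]
    exact ⟨haesm, hfin⟩
  · rw [hfunext, ← MeasureTheory.integral_tsum_of_summable_integral_norm hint hF_sum]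
    have h2F : twoF1 a σ b (lam / μ)
        = ∑' n : ℕ, (poch a n * poch σ n / poch b n) * (lam / μ) ^ n / (n.factorial : ℝ) := rfl
    rw [h2F, ← tsum_mul_left]
    exact tsum_congr hval
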